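/- arXiv:2009.12962 — 3 statements merged into one kernel-verified Lean document; each statement's English description precedes it below -/
import Mathlib

section
/- Let N ≥ 2, r ∈ (0,1), and let Ω ⊂ ℝ^N be an open set satisfying the measure density condition: there exists C_Ω > 0 such that |Ω ∩ B_ρ(x)| ≥ C_Ω ρ^N for all x ∈ Ω and all ρ > 0. Then there exists a constant C = C(Ω, r, N) > 0 such that for every f ∈ L¹(Ω) ∩ L²(Ω) with finite Gagliardo seminorm [f]_{r,Ω}, one has ‖f‖_{L²(Ω)} ≤ C ‖f‖_{L¹(Ω)}^{2r/(N+2r)} [f]_{r,Ω}^{N/(N+2r)}. -/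
open MeasureTheory ENNReal

/-- The squared Gagliardo seminorm `[f]_{s,Ω}²` on an open set `Ω ⊆ ℝ^N`. -/
noncomputable def gagliardoSq {N : ℕ} (s : ℝ) (Ω : Set (EuclideanSpace ℝ (Fin N)))
    (f : EuclideanSpace ℝ (Fin N) → ℝ) : ℝ≥0∞ :=
  ∫⁻ x in Ω, ∫⁻ y in Ω, ENNReal.ofReal ((f x - f y) ^ 2 / ‖x - y‖ ^ ((N : ℝ) + 2 * s))

/-- Fractional Nash inequality for domains satisfying the measure density condition, `N ≥ 2`. -/
theorem nash_exterior_domain (N : ℕ) (hN : 2 ≤ N) (r : ℝ) (hr : r ∈ Set.Ioo (0 : ℝ) 1)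
    (Ω : Set (EuclideanSpace ℝ (Fin N))) (hΩopen : IsOpen Ω)
    (CΩ : ℝ) (hCΩ : 0 < CΩ)
    (hdensity : ∀ x ∈ Ω, ∀ ρ : ℝ, 0 < ρ →
      ENNReal.ofReal (CΩ * ρ ^ N) ≤ volume (Ω ∩ Metric.ball x ρ)) :
    ∃ C : ℝ, 0 < C ∧ ∀ f : EuclideanSpace ℝ (Fin N) → ℝ,
      MemLp f 1 (volume.restrict Ω) → MemLp f 2 (volume.restrict Ω) →
      gagliardoSq r Ω f ≠ ⊤ →
      eLpNorm f 2 (volume.restrict Ω) ≤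
        ENNReal.ofReal C * eLpNorm f 1 (volume.restrict Ω) ^ (2 * r / ((N : ℝ) + 2 * r)) *
          gagliardoSq r Ω f ^ ((N : ℝ) / (2 * ((N : ℝ) + 2 * r))) := by
  obtain ⟨hr0, hr1⟩ := hr
  have hNpos : (0:ℝ) < N := by
    have : (2:ℝ) ≤ N := by exact_mod_cast hN
    linarith
  set p : ℝ := (N : ℝ) + 2 * r with hpdef
  have hp : 0 < p := by positivity
  refine ⟨Real.sqrt (3 / CΩ), Real.sqrt_pos.mpr (by positivity), ?_⟩
  intro f hf1 hf2 hGtop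
  set μ : Measure (EuclideanSpace ℝ (Fin N)) := volume.restrict Ω with hμ
  set A : ℝ≥0∞ := ∫⁻ x, (‖f x‖₊ : ℝ≥0∞) ∂μ with hA
  set S : ℝ≥0∞ := ∫⁻ x, (‖f x‖₊ : ℝ≥0∞) ^ (2:ℝ) ∂μ with hS
  set G : ℝ≥0∞ := gagliardoSq r Ω f with hGdef
  have hmΩ : MeasurableSet Ω := hΩopen.measurableSet
  have hA1 : eLpNorm f 1 μ = A := eLpNorm_one_eq_lintegral_enorm
  have hAlt : A < ⊤ := hA1 ▸ hf1.2
  have hS2 : eLpNorm f 2 μ = S ^ (1/(2:ℝ)) := by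
    rw [eLpNorm_eq_lintegral_rpow_enorm_toReal two_ne_zero ENNReal.ofNat_ne_top]
    simp only [ENNReal.toReal_ofNat]
    rfl
  have hSlt : S < ⊤ := by
    have h2 := hf2.2
    rw [hS2, ENNReal.rpow_lt_top_iff_of_pos (by norm_num : (0:ℝ) < 1/2)] at h2
    exact h2
  -- the key inequality, for every radius ρ > 0
  have key : ∀ ρ : ℝ, 0 < ρ →
      ENNReal.ofReal (CΩ * ρ ^ N) * S ≤ ENNReal.ofReal (ρ ^ p) * G + 2 * A ^ 2 := by
    intro ρ hρ
    have step1 : ∀ x ∈ Ω,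
        ENNReal.ofReal (CΩ * ρ ^ N) * (‖f x‖₊ : ℝ≥0∞) ^ (2:ℝ)
          ≤ (∫⁻ y in Ω ∩ Metric.ball x ρ, ENNReal.ofReal ((f x - f y) ^ 2))
            + 2 * (‖f x‖₊ : ℝ≥0∞) * A := by
      intro x hx
      have hμle : volume.restrict (Ω ∩ Metric.ball x ρ) ≤ μ := by
        rw [hμ]; exact Measure.restrict_mono Set.inter_subset_left le_rfl
      have hfm' : AEMeasurable (fun y => (‖f y‖₊ : ℝ≥0∞))
          (volume.restrict (Ω ∩ Metric.ball x ρ)) :=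
        (hf1.aestronglyMeasurable.enorm).mono_measure hμle
      have h2 : ∀ y, (‖f x‖₊ : ℝ≥0∞) ^ (2:ℝ)
          ≤ ENNReal.ofReal ((f x - f y) ^ 2) + 2 * (‖f x‖₊ : ℝ≥0∞) * (‖f y‖₊ : ℝ≥0∞) := by
        intro y
        have e1 : (‖f x‖₊ : ℝ≥0∞) ^ (2:ℝ) = ENNReal.ofReal ((f x) ^ 2) := by
          rw [← enorm_eq_nnnorm, Real.enorm_eq_ofReal_abs,
            ENNReal.ofReal_rpow_of_nonneg (abs_nonneg _) (by norm_num),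
            Real.rpow_two, sq_abs]
        have e2 : 2 * (‖f x‖₊ : ℝ≥0∞) * (‖f y‖₊ : ℝ≥0∞)
            = ENNReal.ofReal (2 * |f x| * |f y|) := by
          rw [← enorm_eq_nnnorm, ← enorm_eq_nnnorm, Real.enorm_eq_ofReal_abs, Real.enorm_eq_ofReal_abs,
            ENNReal.ofReal_mul (by positivity), ENNReal.ofReal_mul (by norm_num),
            ENNReal.ofReal_ofNat]
        rw [e1, e2, ← ENNReal.ofReal_add (by positivity) (by positivity)]
        apply ENNReal.ofReal_le_ofReal
        nlinarith [le_abs_self (f x * f y), abs_mul (f x) (f y), sq_nonneg (f x - f y),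
          sq_nonneg (f y)]
      calc ENNReal.ofReal (CΩ * ρ ^ N) * (‖f x‖₊ : ℝ≥0∞) ^ (2:ℝ)
          = (‖f x‖₊ : ℝ≥0∞) ^ (2:ℝ) * ENNReal.ofReal (CΩ * ρ ^ N) := mul_comm _ _
        _ ≤ (‖f x‖₊ : ℝ≥0∞) ^ (2:ℝ) * volume (Ω ∩ Metric.ball x ρ) :=
            mul_le_mul_right (hdensity x hx ρ hρ) _
        _ = ∫⁻ _ in Ω ∩ Metric.ball x ρ, (‖f x‖₊ : ℝ≥0∞) ^ (2:ℝ) :=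
            (setLIntegral_const _ _).symm
        _ ≤ ∫⁻ y in Ω ∩ Metric.ball x ρ,
              (ENNReal.ofReal ((f x - f y) ^ 2) + 2 * (‖f x‖₊ : ℝ≥0∞) * (‖f y‖₊ : ℝ≥0∞)) :=
            lintegral_mono fun y => h2 y
        _ = (∫⁻ y in Ω ∩ Metric.ball x ρ, ENNReal.ofReal ((f x - f y) ^ 2))
              + ∫⁻ y in Ω ∩ Metric.ball x ρ, 2 * (‖f x‖₊ : ℝ≥0∞) * (‖f y‖₊ : ℝ≥0∞) :=
            lintegral_add_right' _ ((hfm'.const_mul _))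
        _ ≤ (∫⁻ y in Ω ∩ Metric.ball x ρ, ENNReal.ofReal ((f x - f y) ^ 2))
              + 2 * (‖f x‖₊ : ℝ≥0∞) * A := by
            gcongr
            rw [lintegral_const_mul' (2 * (‖f x‖₊ : ℝ≥0∞)) _
              (by exact ENNReal.mul_ne_top (by simp) (by simp))]
            exact mul_le_mul_right (lintegral_mono' hμle le_rfl) _
    have hmeas2 : AEMeasurable (fun x => 2 * A * (‖f x‖₊ : ℝ≥0∞)) μ :=
      (hf1.aestronglyMeasurable.enorm).const_mul _
    have step2 : ENNReal.ofReal (CΩ * ρ ^ N) * S ≤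
        (∫⁻ x in Ω, ∫⁻ y in Ω ∩ Metric.ball x ρ, ENNReal.ofReal ((f x - f y) ^ 2))
          + 2 * A ^ 2 := by
      calc ENNReal.ofReal (CΩ * ρ ^ N) * S
          = ∫⁻ x, ENNReal.ofReal (CΩ * ρ ^ N) * (‖f x‖₊ : ℝ≥0∞) ^ (2:ℝ) ∂μ :=
            (lintegral_const_mul' _ _ ENNReal.ofReal_ne_top).symm
        _ ≤ ∫⁻ x, ((∫⁻ y in Ω ∩ Metric.ball x ρ, ENNReal.ofReal ((f x - f y) ^ 2))
              + 2 * A * (‖f x‖₊ : ℝ≥0∞)) ∂μ := by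
            refine lintegral_mono_ae ?_
            rw [hμ]
            filter_upwards [ae_restrict_mem hmΩ] with x hx
            have := step1 x hx
            calc ENNReal.ofReal (CΩ * ρ ^ N) * (‖f x‖₊ : ℝ≥0∞) ^ (2:ℝ)
                ≤ (∫⁻ y in Ω ∩ Metric.ball x ρ, ENNReal.ofReal ((f x - f y) ^ 2))
                  + 2 * (‖f x‖₊ : ℝ≥0∞) * A := this
              _ = _ := by congr 1; ring
        _ = (∫⁻ x, (∫⁻ y in Ω ∩ Metric.ball x ρ, ENNReal.ofReal ((f x - f y) ^ 2)) ∂μ)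
              + ∫⁻ x, 2 * A * (‖f x‖₊ : ℝ≥0∞) ∂μ :=
            lintegral_add_right' _ hmeas2
        _ = (∫⁻ x in Ω, ∫⁻ y in Ω ∩ Metric.ball x ρ, ENNReal.ofReal ((f x - f y) ^ 2))
              + 2 * A ^ 2 := by
            rw [hμ]
            congr 1
            rw [← hμ, lintegral_const_mul' _ _ (ENNReal.mul_ne_top (by simp) hAlt.ne), ← hA]
            ring
    have step3 : (∫⁻ x in Ω, ∫⁻ y in Ω ∩ Metric.ball x ρ, ENNReal.ofReal ((f x - f y) ^ 2))
        ≤ ENNReal.ofReal (ρ ^ p) * G := by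
      have hpt : ∀ x y : EuclideanSpace ℝ (Fin N), y ∈ Metric.ball x ρ →
          ENNReal.ofReal ((f x - f y) ^ 2) ≤
            ENNReal.ofReal (ρ ^ p) * ENNReal.ofReal ((f x - f y) ^ 2 / ‖x - y‖ ^ p) := by
        intro x y hy
        rcases eq_or_ne x y with h | h
        · simp [h]
        · have hd : 0 < ‖x - y‖ := by
            rw [norm_pos_iff]
            exact sub_ne_zero_of_ne h
          have hdρ : ‖x - y‖ < ρ := by
            have := Metric.mem_ball.mp hy
            rwa [dist_eq_norm, ← norm_neg, neg_sub] at this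
          have h1 : ‖x - y‖ ^ p ≤ ρ ^ p := Real.rpow_le_rpow hd.le hdρ.le hp.le
          have h2 : 0 < ‖x - y‖ ^ p := Real.rpow_pos_of_pos hd _
          rw [← ENNReal.ofReal_mul (by positivity)]
          apply ENNReal.ofReal_le_ofReal
          calc (f x - f y) ^ 2 = (f x - f y) ^ 2 / ‖x - y‖ ^ p * ‖x - y‖ ^ p :=
              (div_mul_cancel₀ _ h2.ne').symm
            _ ≤ (f x - f y) ^ 2 / ‖x - y‖ ^ p * ρ ^ p := by
                apply mul_le_mul_of_nonneg_left h1 (by positivity)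
            _ = ρ ^ p * ((f x - f y) ^ 2 / ‖x - y‖ ^ p) := mul_comm _ _
      rw [hGdef]
      unfold gagliardoSq
      rw [← lintegral_const_mul' _ _ ENNReal.ofReal_ne_top]
      refine lintegral_mono fun x => ?_
      rw [← lintegral_const_mul' _ _ ENNReal.ofReal_ne_top]
      calc (∫⁻ y in Ω ∩ Metric.ball x ρ, ENNReal.ofReal ((f x - f y) ^ 2))
          ≤ ∫⁻ y in Ω ∩ Metric.ball x ρ,
              ENNReal.ofReal (ρ ^ p) * ENNReal.ofReal ((f x - f y) ^ 2 / ‖x - y‖ ^ p) := by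
            refine lintegral_mono_ae ?_
            filter_upwards [ae_restrict_mem (hmΩ.inter measurableSet_ball)] with y hy
            exact hpt x y hy.2
        _ ≤ ∫⁻ y in Ω,
              ENNReal.ofReal (ρ ^ p) * ENNReal.ofReal ((f x - f y) ^ 2 / ‖x - y‖ ^ p) :=
            lintegral_mono' (Measure.restrict_mono Set.inter_subset_left le_rfl) le_rfl
    exact step2.trans (add_le_add_left step3 _)
  -- dispose of degenerate cases
  rcases eq_or_ne A 0 with hA0 | hA0
  · have hf0 : f =ᵐ[μ] 0 := by
      rw [← eLpNorm_eq_zero_iff hf1.aestronglyMeasurable one_ne_zero, hA1]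
      exact hA0
    have : eLpNorm f 2 μ = 0 := by
      rw [eLpNorm_congr_ae hf0, eLpNorm_zero]
    rw [hμ] at this
    rw [this]
    exact zero_le
  rcases eq_or_ne G 0 with hG0 | hG0
  · -- then S = 0
    have hS0 : S = 0 := by
      by_contra hS0
      set ε : ℝ := S.toReal with hε
      have hεpos : 0 < ε := ENNReal.toReal_pos hS0 hSlt.ne
      set B : ℝ := (2 * A ^ 2).toReal with hB
      have hBnn : 0 ≤ B := ENNReal.toReal_nonneg
      have hBeq : 2 * A ^ 2 = ENNReal.ofReal B := by
        rw [hB, ENNReal.ofReal_toReal]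
        exact ENNReal.mul_ne_top (by simp) (by simp [pow_eq_top_iff, hAlt.ne])
      set ρ : ℝ := ((B + 1) / (CΩ * ε)) ^ ((1:ℝ)/N) with hρdef
      have hbase : 0 < (B + 1) / (CΩ * ε) := by positivity
      have hρ : 0 < ρ := Real.rpow_pos_of_pos hbase _
      have hρN : CΩ * ρ ^ N = (B + 1) / ε := by
        have : ρ ^ N = (B + 1) / (CΩ * ε) := by
          rw [hρdef, ← Real.rpow_natCast (((B + 1) / (CΩ * ε)) ^ ((1:ℝ)/N)) N,
            ← Real.rpow_mul hbase.le, one_div, inv_mul_cancel₀ (by positivity : (N:ℝ) ≠ 0),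
            Real.rpow_one]
        rw [this]
        field_simp
      have hk := key ρ hρ
      rw [hG0, mul_zero, zero_add, hρN, hBeq] at hk
      have hSε : ENNReal.ofReal ε ≤ S := by
        rw [hε, ENNReal.ofReal_toReal hSlt.ne]
      have hcontra : ENNReal.ofReal (B + 1) ≤ ENNReal.ofReal B := by
        calc ENNReal.ofReal (B + 1) = ENNReal.ofReal ((B + 1) / ε * ε) := by
              rw [div_mul_cancel₀ _ hεpos.ne']
          _ = ENNReal.ofReal ((B + 1) / ε) * ENNReal.ofReal ε := by
              rw [ENNReal.ofReal_mul (by positivity)]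
          _ ≤ ENNReal.ofReal ((B + 1) / ε) * S := mul_le_mul_right hSε _
          _ ≤ ENNReal.ofReal B := hk
      have : B + 1 ≤ B := by
        have := (ENNReal.ofReal_le_ofReal_iff hBnn).mp hcontra
        linarith
      linarith
    have : eLpNorm f 2 μ = 0 := by
      rw [hS2, hS0, ENNReal.zero_rpow_of_pos (by norm_num)]
    rw [hμ] at this
    rw [this]
    exact zero_le
  -- main case
  set a : ℝ := A.toReal with ha
  set g : ℝ := G.toReal with hg
  have hapos : 0 < a := ENNReal.toReal_pos hA0 hAlt.ne
  have hgpos : 0 < g := ENNReal.toReal_pos hG0 hGtop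
  have hAeq : A = ENNReal.ofReal a := (ENNReal.ofReal_toReal hAlt.ne).symm
  have hGeq : G = ENNReal.ofReal g := (ENNReal.ofReal_toReal hGtop).symm
  set ρ : ℝ := (a ^ 2 / g) ^ ((1:ℝ)/p) with hρdef
  have hbase : 0 < a ^ 2 / g := by positivity
  have hρ : 0 < ρ := Real.rpow_pos_of_pos hbase _
  have hρp : ρ ^ p = a ^ 2 / g := by
    rw [hρdef, ← Real.rpow_mul hbase.le, one_div, inv_mul_cancel₀ hp.ne', Real.rpow_one]
  have hρN : (ρ : ℝ) ^ N = (a ^ 2 / g) ^ ((N:ℝ)/p) := by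
    rw [← Real.rpow_natCast ρ N, hρdef, ← Real.rpow_mul hbase.le, one_div,
      inv_mul_eq_div]
  have hk := key ρ hρ
  -- rewrite RHS of key as ofReal (3 a²)
  have hrhs : ENNReal.ofReal (ρ ^ p) * G + 2 * A ^ 2 = ENNReal.ofReal (3 * a ^ 2) := by
    rw [hρp, hGeq, hAeq, ← ENNReal.ofReal_mul hbase.le,
      div_mul_cancel₀ _ hgpos.ne', ← ENNReal.ofReal_pow hapos.le,
      ← ENNReal.ofReal_ofNat 2, ← ENNReal.ofReal_mul (by norm_num),
      ← ENNReal.ofReal_add (by positivity) (by positivity)]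
    ring_nf
  rw [hrhs] at hk
  have hCρN : 0 < CΩ * ρ ^ N := by positivity
  have hSle : S ≤ ENNReal.ofReal (3 * a ^ 2 / (CΩ * ρ ^ N)) := by
    rw [ENNReal.ofReal_div_of_pos hCρN]
    rw [ENNReal.le_div_iff_mul_le (Or.inl (by positivity : ENNReal.ofReal (CΩ * ρ ^ N) ≠ 0))
      (Or.inl ENNReal.ofReal_ne_top)]
    rw [mul_comm]
    exact hk
  -- identify the value
  set V : ℝ := Real.sqrt (3 / CΩ) * a ^ (2 * r / p) * g ^ ((N:ℝ) / (2 * p)) with hV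
  have hVpos : 0 < V := by
    have h1 : 0 < Real.sqrt (3 / CΩ) := Real.sqrt_pos.mpr (by positivity)
    have h2 : 0 < a ^ (2 * r / p) := Real.rpow_pos_of_pos hapos _
    have h3 : 0 < g ^ ((N:ℝ) / (2 * p)) := Real.rpow_pos_of_pos hgpos _
    positivity
  have hVeq : 3 * a ^ 2 / (CΩ * ρ ^ N) = V ^ 2 := by
    have e1 : (a ^ 2 / g) ^ ((N:ℝ)/p) = a ^ (2 * ((N:ℝ)/p)) / g ^ ((N:ℝ)/p) := by
      rw [Real.div_rpow (by positivity) hgpos.le, ← Real.rpow_two a,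
        ← Real.rpow_mul hapos.le]
    have e7 : a ^ (2:ℝ) = a ^ (2 * (2 * r / p)) * a ^ (2 * ((N:ℝ)/p)) := by
      rw [← Real.rpow_add hapos]
      congr 1
      rw [hpdef]
      have hne : (N:ℝ) + 2 * r ≠ 0 := by positivity
      field_simp
      ring
    have e4 : a ^ (2 * (2 * r / p)) = (a ^ (2 * r / p)) ^ 2 := by
      rw [← Real.rpow_two (a ^ (2 * r / p)), ← Real.rpow_mul hapos.le]
      ring_nf
    have e5 : g ^ ((N:ℝ)/p) = (g ^ ((N:ℝ) / (2 * p))) ^ 2 := by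
      rw [← Real.rpow_two (g ^ ((N:ℝ)/(2*p))), ← Real.rpow_mul hgpos.le]
      congr 1
      have hne : p ≠ 0 := hp.ne'
      field_simp
    have e6 : Real.sqrt (3 / CΩ) ^ 2 = 3 / CΩ := Real.sq_sqrt (by positivity)
    rw [hV, mul_pow, mul_pow, e6, ← e4, ← e5, hρN, e1]
    rw [← Real.rpow_two a, e7]
    have hX : a ^ (2 * ((N:ℝ)/p)) ≠ 0 := (Real.rpow_pos_of_pos hapos _).ne'
    have hY : g ^ ((N:ℝ)/p) ≠ 0 := (Real.rpow_pos_of_pos hgpos _).ne'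
    field_simp
  -- conclude
  have hfinal : eLpNorm f 2 μ ≤ ENNReal.ofReal V := by
    rw [hS2]
    calc S ^ (1/(2:ℝ)) ≤ (ENNReal.ofReal (V ^ 2)) ^ (1/(2:ℝ)) := by
          rw [← hVeq]
          exact ENNReal.rpow_le_rpow hSle (by norm_num)
      _ = ENNReal.ofReal V := by
          rw [ENNReal.ofReal_rpow_of_pos (by positivity), ← Real.rpow_two V,
            ← Real.rpow_mul hVpos.le]
          norm_num
  have hsplit : ENNReal.ofReal V = ENNReal.ofReal (Real.sqrt (3 / CΩ)) *
      (ENNReal.ofReal a) ^ (2 * r / p) * (ENNReal.ofReal g) ^ ((N:ℝ) / (2 * p)) := by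
    rw [hV, ENNReal.ofReal_mul (by positivity), ENNReal.ofReal_mul (by positivity),
      ENNReal.ofReal_rpow_of_pos hapos, ENNReal.ofReal_rpow_of_pos hgpos]
  rw [← hμ] at *
  calc eLpNorm f 2 μ ≤ ENNReal.ofReal V := hfinal
    _ = ENNReal.ofReal (Real.sqrt (3 / CΩ)) *
        (ENNReal.ofReal a) ^ (2 * r / p) * (ENNReal.ofReal g) ^ ((N:ℝ) / (2 * p)) := hsplit
    _ = ENNReal.ofReal (Real.sqrt (3 / CΩ)) * eLpNorm f 1 μ ^ (2 * r / ((N : ℝ) + 2 * r)) *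
        gagliardoSq r Ω f ^ ((N : ℝ) / (2 * ((N : ℝ) + 2 * r))) := by
      rw [← hAeq, ← hGeq, hA1, hpdef, hGdef]
end

section
/- Let Ω ⊂ ℝ^N be an open set satisfying the measure density condition: there exists C_Ω > 0 such that |Ω ∩ B_ρ(x)| ≥ C_Ω ρ^N for all x ∈ Ω and all ρ > 0. Let s ∈ (0,1) with 2s < N and set 2* = 2N/(N − 2s). Then there exists C = C(Ω, N, s) > 0 such that for every f ∈ L²(Ω) with finite Gagliardo seminorm [f]_{s,Ω}, one has ‖f‖_{L^{2*}(Ω)} ≤ C [f]_{s,Ω}. -/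
open MeasureTheory ENNReal

lemma rpow_ne_top' {x : ℝ≥0∞} (hx : x ≠ 0) (hx' : x ≠ ⊤) (y : ℝ) : x ^ y ≠ ⊤ := by
  intro h
  rcases ENNReal.rpow_eq_top_iff.mp h with ⟨h1, _⟩ | ⟨h1, _⟩
  · exact hx h1
  · exact hx' h1

lemma rpow_pos' {x : ℝ≥0∞} (hx : x ≠ 0) (hx' : x ≠ ⊤) (y : ℝ) : x ^ y ≠ 0 :=
  (ENNReal.rpow_pos (lt_of_le_of_ne zero_le (Ne.symm hx)) hx').ne'

/-- Generic optimization lemma. -/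
lemma opt_lemma {X c1 c2 A G : ℝ≥0∞} {a b : ℝ} (ha : 0 < a) (hb : 0 < b)
    (hA0 : A ≠ 0) (hAt : A ≠ ⊤) (hG0 : G ≠ 0) (hGt : G ≠ ⊤)
    (h : ∀ t : ℝ≥0∞, t ≠ 0 → t ≠ ⊤ → X ≤ c1 * t ^ a * G + c2 * t ^ (-b) * A) :
    X ≤ (c1 + c2) * (A ^ (a / (a + b)) * G ^ (b / (a + b))) := by
  have hab : a + b ≠ 0 := by positivity
  set e : ℝ := 1 / (a + b) with he
  set t : ℝ≥0∞ := A ^ e * G ^ (-e) with ht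
  have ht0 : t ≠ 0 := mul_ne_zero (rpow_pos' hA0 hAt e) (rpow_pos' hG0 hGt (-e))
  have htt : t ≠ ⊤ := ENNReal.mul_ne_top (rpow_ne_top' hA0 hAt e) (rpow_ne_top' hG0 hGt (-e))
  have key := h t ht0 htt
  have hGmul : ∀ u v : ℝ, G ^ u * G ^ v = G ^ (u + v) := fun u v =>
    (ENNReal.rpow_add u v hG0 hGt).symm
  have hAmul : ∀ u v : ℝ, A ^ u * A ^ v = A ^ (u + v) := fun u v =>
    (ENNReal.rpow_add u v hA0 hAt).symm
  have hta : c1 * t ^ a * G = c1 * (A ^ (a / (a + b)) * G ^ (b / (a + b))) := by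
    rw [ht, ENNReal.mul_rpow_of_ne_zero (rpow_pos' hA0 hAt e) (rpow_pos' hG0 hGt (-e)) a,
      ← ENNReal.rpow_mul, ← ENNReal.rpow_mul]
    rw [mul_assoc, mul_assoc]
    congr 1
    have hg : G ^ (-e * a) * G = G ^ (-e * a + 1) := by
      rw [ENNReal.rpow_add _ _ hG0 hGt, ENNReal.rpow_one]
    rw [hg]
    have e1 : e * a = a / (a + b) := by rw [he]; ring
    have e2 : -e * a + 1 = b / (a + b) := by rw [he]; field_simp; ring
    rw [e1, e2]
  have htb : c2 * t ^ (-b) * A = c2 * (A ^ (a / (a + b)) * G ^ (b / (a + b))) := by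
    rw [ht, ENNReal.mul_rpow_of_ne_zero (rpow_pos' hA0 hAt e) (rpow_pos' hG0 hGt (-e)) (-b),
      ← ENNReal.rpow_mul, ← ENNReal.rpow_mul]
    rw [mul_assoc]
    congr 1
    rw [mul_comm]
    have hg : A * (A ^ (e * -b) * G ^ (-e * -b)) = A ^ (e * -b + 1) * G ^ (-e * -b) := by
      rw [← mul_assoc, mul_comm A, ENNReal.rpow_add _ _ hA0 hAt, ENNReal.rpow_one]
    rw [hg]
    have e1 : e * -b + 1 = a / (a + b) := by rw [he]; field_simp; ring
    have e2 : -e * -b = b / (a + b) := by rw [he]; ring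
    rw [e1, e2]
  rw [hta, htb, ← add_mul] at key
  exact key


variable {N : ℕ} {Ω : Set (EuclideanSpace ℝ (Fin N))}

lemma pointwise_bound (hΩ : MeasurableSet Ω)
    {CΩ s p : ℝ} (hCΩ : 0 < CΩ) (hs : 0 < s) (hN : 0 < N) (hp1 : 1 < p)
    (hdensity : ∀ x ∈ Ω, ∀ ρ : ℝ, 0 < ρ →
      ENNReal.ofReal (CΩ * ρ ^ N) ≤ volume (Ω ∩ Metric.ball x ρ))
    (f : EuclideanSpace ℝ (Fin N) → ℝ) (hf : Measurable f)
    {x : EuclideanSpace ℝ (Fin N)} (hx : x ∈ Ω) {r : ℝ} (hr : 0 < r) :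
    (‖f x‖₊ : ℝ≥0∞) ≤
      (ENNReal.ofReal CΩ) ^ (-(1:ℝ)/2) * (ENNReal.ofReal r) ^ s *
        (∫⁻ y in Ω, ENNReal.ofReal ((f x - f y) ^ 2 / ‖x - y‖ ^ ((N : ℝ) + 2 * s))) ^ (1/2 : ℝ)
      + (ENNReal.ofReal CΩ) ^ (-(1/p)) * (ENNReal.ofReal r) ^ (-((N:ℝ)/p)) *
        (∫⁻ y in Ω, (‖f y‖₊ : ℝ≥0∞) ^ p) ^ (1/p) := by
  have hp0 : 0 < p := lt_trans one_pos hp1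
  set n : ℝ := (N : ℝ) with hn
  have hn0 : (0:ℝ) < n := by rw [hn]; exact_mod_cast hN
  have hns : 0 < n + 2 * s := by positivity
  set S : Set (EuclideanSpace ℝ (Fin N)) := Ω ∩ Metric.ball x r with hS
  have hSmeas : MeasurableSet S := hΩ.inter measurableSet_ball
  set m : ℝ≥0∞ := volume S with hm
  have hm_lb : ENNReal.ofReal (CΩ * r ^ N) ≤ m := hdensity x hx r hr
  have hCr : (0:ℝ) < CΩ * r ^ N := by positivity
  have hm0 : m ≠ 0 := by
    intro h
    rw [h, nonpos_iff_eq_zero, ENNReal.ofReal_eq_zero] at hm_lb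
    linarith
  have hmt : m ≠ ⊤ := by
    refine ne_top_of_le_ne_top ?_ (measure_mono Set.inter_subset_right)
    exact (measure_ball_lt_top).ne
  set F : EuclideanSpace ℝ (Fin N) → ℝ≥0∞ := fun z => (‖f z‖₊ : ℝ≥0∞) with hF
  have hFmeas : Measurable F := hf.nnnorm.coe_nnreal_ennreal
  have hFabs : ∀ z, F z = ENNReal.ofReal |f z| := fun z => Real.enorm_eq_ofReal_abs (f z)
  set q : EuclideanSpace ℝ (Fin N) → ℝ≥0∞ :=
    fun y => ENNReal.ofReal ((f x - f y) ^ 2 / ‖x - y‖ ^ (n + 2 * s)) with hq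
  have hdcont : Continuous (fun y : EuclideanSpace ℝ (Fin N) => ‖x - y‖ ^ (n + 2 * s)) := by
    apply Continuous.rpow_const ((continuous_const.sub continuous_id).norm)
    exact fun y => Or.inr (le_of_lt hns)
  have hqmeas : Measurable q := by
    apply ENNReal.measurable_ofReal.comp
    exact ((measurable_const.sub hf).pow_const 2).div hdcont.measurable
  have hdmeas : Measurable (fun y : EuclideanSpace ℝ (Fin N) =>
      ENNReal.ofReal (‖x - y‖ ^ (n + 2 * s))) :=
    ENNReal.measurable_ofReal.comp hdcont.measurable
  -- Step 1
  have step1 : F x * m ≤ (∫⁻ y in S, ENNReal.ofReal |f x - f y|) + ∫⁻ y in S, F y := by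
    have h0 : F x * m = ∫⁻ _ in S, F x := (setLIntegral_const S (F x)).symm
    rw [h0]
    calc ∫⁻ _ in S, F x ≤ ∫⁻ y in S, (ENNReal.ofReal |f x - f y| + F y) := by
          apply lintegral_mono
          intro y
          show F x ≤ ENNReal.ofReal |f x - f y| + F y
          rw [hFabs x, hFabs y, ← ENNReal.ofReal_add (abs_nonneg _) (abs_nonneg _)]
          apply ENNReal.ofReal_le_ofReal
          calc |f x| = |(f x - f y) + f y| := by ring_nf
            _ ≤ |f x - f y| + |f y| := abs_add_le _ _
      _ = (∫⁻ y in S, ENNReal.ofReal |f x - f y|) + ∫⁻ y in S, F y := by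
          apply lintegral_add_left
          exact ENNReal.measurable_ofReal.comp ((measurable_const.sub hf).norm)
  -- Step 2: Cauchy-Schwarz
  have step2 : (∫⁻ y in S, ENNReal.ofReal |f x - f y|) ≤
      (∫⁻ y in Ω, q y) ^ (1/2 : ℝ) * (ENNReal.ofReal (r ^ (n + 2 * s)) * m) ^ (1/2 : ℝ) := by
    have hid : ∀ y, ENNReal.ofReal |f x - f y| =
        (q y ^ (1/2 : ℝ)) * ((ENNReal.ofReal (‖x - y‖ ^ (n + 2 * s))) ^ (1/2 : ℝ)) := by
      intro y
      rw [hq]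
      set a : ℝ := f x - f y with ha
      set d : ℝ := ‖x - y‖ ^ (n + 2 * s) with hd
      have hd0 : 0 ≤ d := Real.rpow_nonneg (norm_nonneg _) _
      rcases eq_or_lt_of_le hd0 with hd_eq | hd_pos
      · have hxy : ‖x - y‖ = 0 := by
          by_contra hne
          have h1 : 0 < ‖x - y‖ := lt_of_le_of_ne (norm_nonneg _) (Ne.symm hne)
          have h2 := Real.rpow_pos_of_pos h1 (n + 2 * s)
          rw [← hd] at h2; linarith [hd_eq]
        have hxy' : x = y := by rwa [norm_sub_eq_zero_iff] at hxy
        have ha0 : a = 0 := by simp [ha, hxy']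
        simp [ha0, ← hd_eq, ENNReal.zero_rpow_of_pos (by norm_num : (0:ℝ) < 1/2)]
      · rw [← ENNReal.mul_rpow_of_nonneg _ _ (by norm_num : (0:ℝ) ≤ 1/2),
          ← ENNReal.ofReal_mul (by positivity), div_mul_cancel₀ _ (ne_of_gt hd_pos),
          ENNReal.ofReal_rpow_of_nonneg (sq_nonneg a) (by norm_num : (0:ℝ) ≤ 1/2)]
        congr 1
        rw [← sq_abs a, ← Real.rpow_natCast |a| 2, ← Real.rpow_mul (abs_nonneg a)]
        norm_num
    calc (∫⁻ y in S, ENNReal.ofReal |f x - f y|)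
        = ∫⁻ y in S, ((fun y => q y ^ (1/2:ℝ)) * fun y => (ENNReal.ofReal (‖x - y‖ ^ (n + 2*s))) ^ (1/2:ℝ)) y := by
          apply lintegral_congr; intro y; exact hid y
      _ ≤ (∫⁻ y in S, (q y ^ (1/2:ℝ)) ^ (2:ℝ)) ^ (1/(2:ℝ)) *
          (∫⁻ y in S, ((ENNReal.ofReal (‖x - y‖ ^ (n + 2*s))) ^ (1/2:ℝ)) ^ (2:ℝ)) ^ (1/(2:ℝ)) := by
          apply ENNReal.lintegral_mul_le_Lp_mul_Lq _
            (Real.HolderConjugate.two_two : Real.HolderConjugate 2 2) ?_ ?_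
          · exact ((hqmeas.pow_const _).aemeasurable)
          · exact ((hdmeas.pow_const _).aemeasurable)
      _ ≤ (∫⁻ y in Ω, q y) ^ (1/2 : ℝ) * (ENNReal.ofReal (r ^ (n + 2 * s)) * m) ^ (1/2 : ℝ) := by
          apply mul_le_mul'
          · apply ENNReal.rpow_le_rpow _ (by norm_num)
            calc ∫⁻ y in S, (q y ^ (1/2:ℝ)) ^ (2:ℝ) = ∫⁻ y in S, q y := by
                  apply lintegral_congr; intro y
                  rw [← ENNReal.rpow_mul]; norm_num
              _ ≤ ∫⁻ y in Ω, q y := lintegral_mono_set Set.inter_subset_left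
          · apply ENNReal.rpow_le_rpow _ (by norm_num)
            calc ∫⁻ y in S, ((ENNReal.ofReal (‖x - y‖ ^ (n + 2*s))) ^ (1/2:ℝ)) ^ (2:ℝ)
                = ∫⁻ y in S, ENNReal.ofReal (‖x - y‖ ^ (n + 2*s)) := by
                  apply lintegral_congr; intro y
                  rw [← ENNReal.rpow_mul]; norm_num
              _ ≤ ∫⁻ _ in S, ENNReal.ofReal (r ^ (n + 2*s)) := by
                  apply setLIntegral_mono measurable_const
                  intro y hy
                  apply ENNReal.ofReal_le_ofReal
                  apply Real.rpow_le_rpow (norm_nonneg _) _ (le_of_lt hns)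
                  have : dist y x < r := Metric.mem_ball.mp hy.2
                  rw [dist_comm] at this
                  calc ‖x - y‖ = dist x y := (dist_eq_norm x y).symm
                    _ ≤ r := le_of_lt this
              _ = ENNReal.ofReal (r ^ (n + 2*s)) * m := setLIntegral_const _ _
  -- Step 3: Hölder with exponent p
  have step3 : (∫⁻ y in S, F y) ≤ (∫⁻ y in Ω, F y ^ p) ^ (1/p) * m ^ (1 - 1/p) := by
    have hpq : p.HolderConjugate (p / (p - 1)) := by
      rw [Real.holderConjugate_iff_eq_conjExponent hp1]
    have CS := ENNReal.lintegral_mul_le_Lp_mul_Lq (volume.restrict S) hpq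
      hFmeas.aemeasurable (aemeasurable_const (b := (1:ℝ≥0∞)))
    simp only [Pi.mul_apply, mul_one, ENNReal.one_rpow] at CS
    calc (∫⁻ y in S, F y)
        ≤ (∫⁻ y in S, F y ^ p) ^ (1/p) * (∫⁻ _ in S, (1:ℝ≥0∞)) ^ (1/(p/(p-1))) := CS
      _ ≤ (∫⁻ y in Ω, F y ^ p) ^ (1/p) * m ^ (1 - 1/p) := by
          apply mul_le_mul'
          · exact ENNReal.rpow_le_rpow (lintegral_mono_set Set.inter_subset_left) (by positivity)
          · apply le_of_eq
            rw [setLIntegral_const, one_mul]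
            congr 1
            have h := hpq.inv_add_inv_eq_one
            simp only [one_div]
            linarith
  -- Combine
  set t : ℝ≥0∞ := ENNReal.ofReal r with htdef
  have ht0 : t ≠ 0 := by
    rw [htdef]; simp [hr]
  have htt : t ≠ ⊤ := ENNReal.ofReal_ne_top
  set G1 : ℝ≥0∞ := (∫⁻ y in Ω, q y) ^ (1/2 : ℝ) with hG1
  set A : ℝ≥0∞ := (∫⁻ y in Ω, F y ^ p) ^ (1/p) with hA
  have hCrN : ENNReal.ofReal (CΩ * r ^ N) = ENNReal.ofReal CΩ * t ^ n := by
    rw [ENNReal.ofReal_mul hCΩ.le, ENNReal.ofReal_pow hr.le, htdef, hn, ← ENNReal.rpow_natCast]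
  have hC0 : ENNReal.ofReal CΩ ≠ 0 := by simp [hCΩ]
  have hmneg : ∀ c : ℝ, 0 ≤ c → m ^ (-c) ≤ (ENNReal.ofReal CΩ) ^ (-c) * t ^ (-(n * c)) := by
    intro c hc
    have h1 : ENNReal.ofReal (CΩ * r ^ N) ^ c ≤ m ^ c := ENNReal.rpow_le_rpow hm_lb hc
    calc m ^ (-c) = (m ^ c)⁻¹ := ENNReal.rpow_neg m c
      _ ≤ (ENNReal.ofReal (CΩ * r ^ N) ^ c)⁻¹ := ENNReal.inv_le_inv.mpr h1
      _ = (ENNReal.ofReal (CΩ * r ^ N)) ^ (-c) := (ENNReal.rpow_neg _ c).symm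
      _ = (ENNReal.ofReal CΩ) ^ (-c) * t ^ (-(n * c)) := by
          rw [hCrN, ENNReal.mul_rpow_of_ne_top ENNReal.ofReal_ne_top (rpow_ne_top' ht0 htt n),
            ← ENNReal.rpow_mul]
          congr 1
          ring
  have hmm : ∀ c : ℝ, m ^ c * m⁻¹ = m ^ (c - 1) := by
    intro c
    rw [← ENNReal.rpow_neg_one m, ← ENNReal.rpow_add _ _ hm0 hmt]
    ring_nf
  calc (‖f x‖₊ : ℝ≥0∞) = F x * m * m⁻¹ := by
        rw [mul_assoc, ENNReal.mul_inv_cancel hm0 hmt, mul_one, hF]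
    _ ≤ (G1 * (ENNReal.ofReal (r ^ (n + 2*s)) * m) ^ (1/2:ℝ) + A * m ^ (1 - 1/p)) * m⁻¹ := by
        apply mul_le_mul_left
        exact le_trans step1 (add_le_add step2 step3)
    _ = G1 * (ENNReal.ofReal (r ^ (n + 2*s)) * m) ^ (1/2:ℝ) * m⁻¹ + A * m ^ (1 - 1/p) * m⁻¹ :=
        add_mul _ _ _
    _ ≤ (ENNReal.ofReal CΩ) ^ (-(1:ℝ)/2) * t ^ s * G1
        + (ENNReal.ofReal CΩ) ^ (-(1/p)) * t ^ (-(n/p)) * A := by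
        apply add_le_add
        · -- piece 1
          have hsplit : (ENNReal.ofReal (r ^ (n + 2*s)) * m) ^ (1/2:ℝ)
              = t ^ ((n + 2*s) * (1/2)) * m ^ ((1:ℝ)/2) := by
            rw [htdef, ← ENNReal.ofReal_rpow_of_pos hr,
              ENNReal.mul_rpow_of_nonneg _ _ (by norm_num : (0:ℝ) ≤ 1/2), ← ENNReal.rpow_mul]
          calc G1 * (ENNReal.ofReal (r ^ (n + 2*s)) * m) ^ (1/2:ℝ) * m⁻¹
              = G1 * t ^ ((n + 2*s) * (1/2)) * (m ^ ((1:ℝ)/2) * m⁻¹) := by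
                rw [hsplit]; ring
            _ = G1 * t ^ ((n + 2*s) * (1/2)) * m ^ (-(1/2:ℝ)) := by
                rw [hmm]; congr 1; norm_num
            _ ≤ G1 * t ^ ((n + 2*s) * (1/2)) *
                ((ENNReal.ofReal CΩ) ^ (-(1/2:ℝ)) * t ^ (-(n * (1/2)))) := by
                exact mul_le_mul_right (hmneg (1/2) (by norm_num)) _
            _ = (ENNReal.ofReal CΩ) ^ (-(1:ℝ)/2) * (t ^ ((n + 2*s) * (1/2)) * t ^ (-(n * (1/2)))) * G1 := by
                rw [show (-(1:ℝ)/2) = (-(1/2:ℝ)) by norm_num]; ring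
            _ = (ENNReal.ofReal CΩ) ^ (-(1:ℝ)/2) * t ^ s * G1 := by
                rw [← ENNReal.rpow_add _ _ ht0 htt]
                congr 2
                ring
        · -- piece 2
          calc A * m ^ (1 - 1/p) * m⁻¹ = A * (m ^ (1 - 1/p) * m⁻¹) := by ring
            _ = A * m ^ (-(1/p)) := by rw [hmm]; congr 1; ring
            _ ≤ A * ((ENNReal.ofReal CΩ) ^ (-(1/p)) * t ^ (-(n * (1/p)))) := by
                exact mul_le_mul_right (hmneg (1/p) (by positivity)) _
            _ = (ENNReal.ofReal CΩ) ^ (-(1/p)) * t ^ (-(n/p)) * A := by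
                rw [show -(n * (1/p)) = -(n/p) by ring]
                ring

lemma expand_helper {K A G : ℝ≥0∞} {p e1 e2 : ℝ} (hKt : K ≠ ⊤)
    (hA0 : A ≠ 0) (hAt : A ≠ ⊤) (hG0 : G ≠ 0) (hGt : G ≠ ⊤)
    (h1 : e1 * p = p - 2) (h2 : e2 * p = 2) :
    (K * (A ^ e1 * G ^ e2)) ^ p = K ^ p * A ^ (p - 2) * G ^ (2:ℝ) := by
  rw [ENNReal.mul_rpow_of_ne_top hKt
      (ENNReal.mul_ne_top (rpow_ne_top' hA0 hAt _) (rpow_ne_top' hG0 hGt _)),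
    ENNReal.mul_rpow_of_ne_top (rpow_ne_top' hA0 hAt _) (rpow_ne_top' hG0 hGt _),
    ← ENNReal.rpow_mul, ← ENNReal.rpow_mul, h1, h2, mul_assoc]

lemma core (hΩ : MeasurableSet Ω)
    {CΩ : ℝ} (hCΩ : 0 < CΩ)
    (hdensity : ∀ x ∈ Ω, ∀ ρ : ℝ, 0 < ρ →
      ENNReal.ofReal (CΩ * ρ ^ N) ≤ volume (Ω ∩ Metric.ball x ρ))
    {s p : ℝ} (hs : 0 < s) (hsN : 2 * s < N) (hp : p = 2 * N / ((N:ℝ) - 2 * s))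
    (f : EuclideanSpace ℝ (Fin N) → ℝ) (hf : Measurable f)
    (hfin : (∫⁻ x in Ω, (‖f x‖₊ : ℝ≥0∞) ^ p) ≠ ⊤) :
    (∫⁻ x in Ω, (‖f x‖₊ : ℝ≥0∞) ^ p) ^ (1/p) ≤
      ((ENNReal.ofReal CΩ) ^ (-(1:ℝ)/2) + (ENNReal.ofReal CΩ) ^ (-(1/p))) ^ (p/2)
        * gagliardoSq s Ω f ^ (1/2 : ℝ) := by
  set n : ℝ := (N : ℝ) with hn
  have hns : 0 < n - 2 * s := by rw [hn]; linarith
  have hn0 : (0:ℝ) < n := by linarith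
  have hN : 0 < N := by have h := hn0; rw [hn] at h; exact_mod_cast h
  have hp1 : 1 < p := by
    rw [hp, lt_div_iff₀ hns]
    linarith
  have hp0 : 0 < p := lt_trans one_pos hp1
  have hC0 : ENNReal.ofReal CΩ ≠ 0 := by simp [hCΩ]
  have hCt : ENNReal.ofReal CΩ ≠ ⊤ := ENNReal.ofReal_ne_top
  set F : EuclideanSpace ℝ (Fin N) → ℝ≥0∞ := fun z => (‖f z‖₊ : ℝ≥0∞) with hF
  set g2 : EuclideanSpace ℝ (Fin N) → ℝ≥0∞ :=
    fun x => ∫⁻ y in Ω, ENNReal.ofReal ((f x - f y) ^ 2 / ‖x - y‖ ^ (n + 2 * s)) with hg2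
  have hD : gagliardoSq s Ω f = ∫⁻ x in Ω, g2 x := rfl
  set D : ℝ≥0∞ := ∫⁻ x in Ω, g2 x with hDdef
  set B : ℝ≥0∞ := ∫⁻ x in Ω, F x ^ p with hB
  set A : ℝ≥0∞ := B ^ (1/p) with hA
  set K : ℝ≥0∞ := (ENNReal.ofReal CΩ) ^ (-(1:ℝ)/2) + (ENNReal.ofReal CΩ) ^ (-(1/p)) with hK
  have hK0 : K ≠ 0 := by
    rw [hK]
    intro h
    rcases add_eq_zero.mp h with ⟨h1, _⟩
    exact rpow_pos' hC0 hCt _ h1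
  have hKt : K ≠ ⊤ :=
    ENNReal.add_ne_top.mpr ⟨rpow_ne_top' hC0 hCt _, rpow_ne_top' hC0 hCt _⟩
  show A ≤ K ^ (p/2) * D ^ (1/2 : ℝ)
  rcases eq_or_ne A 0 with hA0 | hA0
  · rw [hA0]; exact zero_le
  have hAt : A ≠ ⊤ := ENNReal.rpow_ne_top_of_nonneg (by positivity) hfin
  have P2 : ∀ x ∈ Ω, ∀ t : ℝ≥0∞, t ≠ 0 → t ≠ ⊤ →
      F x ≤ (ENNReal.ofReal CΩ) ^ (-(1:ℝ)/2) * t ^ s * (g2 x) ^ (1/2:ℝ)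
        + (ENNReal.ofReal CΩ) ^ (-(1/p)) * t ^ (-(n/p)) * A := by
    intro x hx t ht0 htt
    have hr : 0 < t.toReal := ENNReal.toReal_pos ht0 htt
    have h := pointwise_bound hΩ hCΩ hs hN hp1 hdensity f hf hx hr
    rwa [ENNReal.ofReal_toReal htt] at h
  have P3 : ∀ x ∈ Ω, F x ^ p ≤ K ^ p * A ^ (p - 2) * g2 x := by
    intro x hx
    rcases eq_or_ne (g2 x) 0 with hg0 | hg0
    · have hFx0 : F x = 0 := by
        by_contra hne
        have hFt : F x ≠ ⊤ := ENNReal.coe_ne_top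
        set M : ℝ≥0∞ := (ENNReal.ofReal CΩ) ^ (-(1/p)) * A with hMdef
        have hM0 : M ≠ 0 := mul_ne_zero (rpow_pos' hC0 hCt _) hA0
        have hMt : M ≠ ⊤ := ENNReal.mul_ne_top (rpow_ne_top' hC0 hCt _) hAt
        set ε : ℝ≥0∞ := F x / 2 with hε
        have hε0 : ε ≠ 0 := by
          rw [hε]
          simp [ENNReal.div_eq_zero_iff, hne]
        have hεt : ε ≠ ⊤ := by
          rw [hε]
          simp [ENNReal.div_eq_top, hFt]
        have hq0 : M / ε ≠ 0 := by
          simp [ENNReal.div_eq_zero_iff, hM0, hεt]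
        have hqt : M / ε ≠ ⊤ := by
          simp [ENNReal.div_eq_top, hMt, hε0]
        set t : ℝ≥0∞ := (M / ε) ^ (p/n) with htdef
        have ht0 : t ≠ 0 := rpow_pos' hq0 hqt _
        have htt : t ≠ ⊤ := rpow_ne_top' hq0 hqt _
        have hle := P2 x hx t ht0 htt
        rw [hg0, ENNReal.zero_rpow_of_pos (by norm_num : (0:ℝ) < 1/2), mul_zero, zero_add] at hle
        have hexp : t ^ (-(n/p)) = ε / M := by
          rw [htdef, ← ENNReal.rpow_mul,
            show (p/n) * (-(n/p)) = (-1 : ℝ) by field_simp,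
            ENNReal.rpow_neg_one, ENNReal.inv_div (Or.inl hεt) (Or.inl hε0)]
        rw [hexp] at hle
        have heq : (ENNReal.ofReal CΩ) ^ (-(1/p)) * (ε / M) * A = ε := by
          calc (ENNReal.ofReal CΩ) ^ (-(1/p)) * (ε / M) * A = M * (ε / M) := by
                rw [hMdef]; ring
            _ = ε := ENNReal.mul_div_cancel hM0 hMt
        rw [heq] at hle
        have hhalf : ε < F x := by
          rw [hε]; exact ENNReal.half_lt_self hne hFt
        exact absurd hle (not_le.mpr hhalf)
      rw [hFx0, ENNReal.zero_rpow_of_pos hp0]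
      exact zero_le
    rcases eq_or_ne (g2 x) ⊤ with hgt | hgt
    · rw [hgt, ENNReal.mul_top (mul_ne_zero (rpow_pos' hK0 hKt _) (rpow_pos' hA0 hAt _))]
      exact le_top
    · set G : ℝ≥0∞ := (g2 x) ^ (1/2:ℝ) with hG
      have hG0 : G ≠ 0 := rpow_pos' hg0 hgt _
      have hGt : G ≠ ⊤ := rpow_ne_top' hg0 hgt _
      have hopt := opt_lemma hs (by positivity : (0:ℝ) < n/p) hA0 hAt hG0 hGt
        (fun t ht0 htt => P2 x hx t ht0 htt)
      have he1 : s / (s + n/p) * p = p - 2 := by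
        have h1 := hns.ne'; have h2 := hn0.ne'
        have h3 : s + n/p = n/2 := by rw [hp]; field_simp; ring
        rw [h3, hp]; field_simp; linear_combination (-1:ℝ) * mul_inv_cancel₀ h1
      have he2 : n/p / (s + n/p) * p = 2 := by
        rw [hp]; field_simp; ring
      have hstep := ENNReal.rpow_le_rpow hopt (le_of_lt hp0)
      have hG2 : G ^ (2:ℝ) = g2 x := by
        rw [hG, ← ENNReal.rpow_mul]
        norm_num
      have hexpand : (K * (A ^ (s / (s + n/p)) * G ^ (n/p / (s + n/p)))) ^ p
          = K ^ p * A ^ (p - 2) * g2 x := by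
        rw [expand_helper hKt hA0 hAt hG0 hGt he1 he2, hG2]
      rw [hexpand] at hstep
      exact hstep
  have intstep : B ≤ K ^ p * A ^ (p - 2) * D := by
    calc B = ∫⁻ x in Ω, F x ^ p := hB
      _ ≤ ∫⁻ x in Ω, K ^ p * A ^ (p - 2) * g2 x :=
          lintegral_mono_ae ((ae_restrict_iff' hΩ).mpr (ae_of_all _ P3))
      _ = K ^ p * A ^ (p - 2) * D := by
          rw [lintegral_const_mul' _ _
            (ENNReal.mul_ne_top (rpow_ne_top' hK0 hKt _) (rpow_ne_top' hA0 hAt _))]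
  have hBA : B = A ^ (2:ℝ) * A ^ (p - 2) := by
    have h1 : B = A ^ p := by
      rw [hA, ← ENNReal.rpow_mul, show (1/p) * p = 1 by field_simp, ENNReal.rpow_one]
    rw [h1, ← ENNReal.rpow_add _ _ hA0 hAt]
    congr 1
    ring
  rw [hBA] at intstep
  have hcancel : A ^ (2:ℝ) ≤ K ^ p * D := by
    have h2 : A ^ (2:ℝ) * A ^ (p - 2) ≤ (K ^ p * D) * A ^ (p - 2) := by
      calc A ^ (2:ℝ) * A ^ (p - 2) ≤ K ^ p * A ^ (p - 2) * D := intstep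
        _ = (K ^ p * D) * A ^ (p - 2) := by ring
    exact (ENNReal.mul_le_mul_iff_left (rpow_pos' hA0 hAt _) (rpow_ne_top' hA0 hAt _)).mp h2
  calc A = (A ^ (2:ℝ)) ^ (1/2:ℝ) := by
        rw [← ENNReal.rpow_mul]; norm_num
    _ ≤ (K ^ p * D) ^ (1/2:ℝ) := ENNReal.rpow_le_rpow hcancel (by norm_num)
    _ = K ^ (p/2) * D ^ (1/2:ℝ) := by
        rw [ENNReal.mul_rpow_of_nonneg _ _ (by norm_num : (0:ℝ) ≤ 1/2), ← ENNReal.rpow_mul]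
        congr 2
        ring


noncomputable def trunc' (M t : ℝ) : ℝ := max (min t M) (-M)

lemma trunc'_lip (M a b : ℝ) : |trunc' M a - trunc' M b| ≤ |a - b| := by
  unfold trunc'
  calc |max (min a M) (-M) - max (min b M) (-M)| ≤ |min a M - min b M| :=
        abs_max_sub_max_le_abs _ _ _
    _ ≤ |a - b| := by
        have h1 : min a M = -max (-a) (-M) := by rw [max_neg_neg, neg_neg]
        have h2 : min b M = -max (-b) (-M) := by rw [max_neg_neg, neg_neg]
        rw [h1, h2, neg_sub_neg]
        calc |max (-b) (-M) - max (-a) (-M)| ≤ |(-b) - (-a)| := abs_max_sub_max_le_abs _ _ _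
          _ = |a - b| := by rw [neg_sub_neg]

lemma trunc'_abs {M : ℝ} (hM : 0 ≤ M) (t : ℝ) : |trunc' M t| = min |t| M := by
  unfold trunc'
  rcases le_total 0 t with ht | ht
  · have h1 : min t M = max (min t M) (-M) := by
      rw [max_eq_left]
      calc -M ≤ 0 := neg_nonpos_of_nonneg hM
        _ ≤ min t M := le_min ht hM
    rw [← h1, abs_of_nonneg (le_min ht hM), abs_of_nonneg ht]
  · have h1 : min t M = t := min_eq_left (le_trans ht hM)
    rw [h1, abs_of_nonpos ht]
    have h2 : max t (-M) ≤ 0 := max_le ht (neg_nonpos_of_nonneg hM)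
    rw [abs_of_nonpos h2]
    rw [show -max t (-M) = min (-t) M by rw [← min_neg_neg, neg_neg]]

lemma gagliardoSq_congr {N : ℕ} {Ω : Set (EuclideanSpace ℝ (Fin N))} {s : ℝ}
    {f g : EuclideanSpace ℝ (Fin N) → ℝ} (hfg : f =ᵐ[volume.restrict Ω] g) :
    gagliardoSq s Ω f = gagliardoSq s Ω g := by
  unfold gagliardoSq
  apply lintegral_congr_ae
  filter_upwards [hfg] with x hx
  apply lintegral_congr_ae
  filter_upwards [hfg] with y hy
  rw [hx, hy]

lemma gagliardoSq_trunc_le {N : ℕ} {Ω : Set (EuclideanSpace ℝ (Fin N))} {s : ℝ}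
    (f : EuclideanSpace ℝ (Fin N) → ℝ) (M : ℝ) :
    gagliardoSq s Ω (fun x => trunc' M (f x)) ≤ gagliardoSq s Ω f := by
  unfold gagliardoSq
  apply lintegral_mono
  intro x
  apply lintegral_mono
  intro y
  apply ENNReal.ofReal_le_ofReal
  rw [div_eq_mul_inv, div_eq_mul_inv]
  apply mul_le_mul_of_nonneg_right _ (inv_nonneg.mpr (Real.rpow_nonneg (norm_nonneg _) _))
  rw [← sq_abs (trunc' M (f x) - trunc' M (f y)), ← sq_abs (f x - f y)]
  exact pow_le_pow_left₀ (abs_nonneg _) (trunc'_lip M _ _) 2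

/-- Fractional Sobolev inequality for domains satisfying the measure density condition. -/
theorem sobolev_measure_density_domain (N : ℕ)
    (Ω : Set (EuclideanSpace ℝ (Fin N))) (hΩopen : IsOpen Ω)
    (CΩ : ℝ) (hCΩ : 0 < CΩ)
    (hdensity : ∀ x ∈ Ω, ∀ ρ : ℝ, 0 < ρ →
      ENNReal.ofReal (CΩ * ρ ^ N) ≤ volume (Ω ∩ Metric.ball x ρ))
    (s : ℝ) (hs : s ∈ Set.Ioo (0 : ℝ) 1) (hsN : 2 * s < N) :
    ∃ C : ℝ, 0 < C ∧ ∀ f : EuclideanSpace ℝ (Fin N) → ℝ,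
      MemLp f 2 (volume.restrict Ω) →
      gagliardoSq s Ω f ≠ ⊤ →
      eLpNorm f (ENNReal.ofReal (2 * N / ((N : ℝ) - 2 * s))) (volume.restrict Ω) ≤
        ENNReal.ofReal C * gagliardoSq s Ω f ^ (1 / 2 : ℝ) := by
  obtain ⟨hs0, hs1⟩ := hs
  have hn0 : (0:ℝ) < N := lt_trans (by linarith) hsN
  have hns : (0:ℝ) < (N:ℝ) - 2 * s := by linarith
  set p : ℝ := 2 * N / ((N : ℝ) - 2 * s) with hp
  have hp1 : 1 < p := by rw [hp, lt_div_iff₀ hns]; linarith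
  have hp0 : 0 < p := by linarith
  have hp2 : 2 < p := by rw [hp, lt_div_iff₀ hns]; linarith
  set c1 : ℝ := CΩ ^ (-(1:ℝ)/2) with hc1
  set c2 : ℝ := CΩ ^ (-(1/p)) with hc2
  have hc1p : 0 < c1 := Real.rpow_pos_of_pos hCΩ _
  have hc2p : 0 < c2 := Real.rpow_pos_of_pos hCΩ _
  refine ⟨(c1 + c2) ^ (p/2), by positivity, ?_⟩
  intro f hf2 _
  set K : ℝ≥0∞ := (ENNReal.ofReal CΩ) ^ (-(1:ℝ)/2) + (ENNReal.ofReal CΩ) ^ (-(1/p)) with hK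
  have hofC : ENNReal.ofReal ((c1 + c2) ^ (p/2)) = K ^ (p/2) := by
    rw [← ENNReal.ofReal_rpow_of_pos (by positivity), ENNReal.ofReal_add hc1p.le hc2p.le, hc1,
      hc2, ← ENNReal.ofReal_rpow_of_pos hCΩ, ← ENNReal.ofReal_rpow_of_pos hCΩ, hK]
  have hmf := hf2.1
  set g := hmf.mk f with hg
  have hfg : f =ᵐ[volume.restrict Ω] g := hmf.ae_eq_mk
  have hgm : Measurable g := hmf.stronglyMeasurable_mk.measurable
  rw [eLpNorm_congr_ae hfg, gagliardoSq_congr hfg]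
  have hg2 : MemLp g 2 (volume.restrict Ω) := hf2.ae_eq hfg
  have hgL2 : (∫⁻ x in Ω, ((‖g x‖₊ : ℝ≥0∞)) ^ (2:ℝ)) ≠ ⊤ := by
    have h := hg2.2
    rw [eLpNorm_eq_eLpNorm' (by norm_num) (by norm_num), eLpNorm'] at h
    simp only [ENNReal.toReal_ofNat] at h
    intro hc
    simp only [← enorm_eq_nnnorm] at hc
    rw [hc] at h
    simp [ENNReal.top_rpow_of_pos (by norm_num : (0:ℝ) < 1/2)] at h
  have hpe0 : ENNReal.ofReal p ≠ 0 := by simp [hp0]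
  have hpet : ENNReal.ofReal p ≠ ⊤ := ENNReal.ofReal_ne_top
  rw [eLpNorm_eq_eLpNorm' hpe0 hpet, eLpNorm', ENNReal.toReal_ofReal hp0.le, hofC]
  set fk : ℕ → EuclideanSpace ℝ (Fin N) → ℝ := fun k x => trunc' k (g x) with hfk
  have hfkm : ∀ k : ℕ, Measurable (fk k) :=
    fun k => ((hgm.min measurable_const).max measurable_const)
  have habs : ∀ (k : ℕ) x, (‖fk k x‖₊ : ℝ≥0∞) = ENNReal.ofReal (min |g x| k) := by
    intro k x
    rw [← enorm_eq_nnnorm, Real.enorm_eq_ofReal_abs]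
    congr 1
    exact trunc'_abs (Nat.cast_nonneg k) _
  have hfin : ∀ k : ℕ, (∫⁻ x in Ω, (‖fk k x‖₊ : ℝ≥0∞) ^ p) ≠ ⊤ := by
    intro k
    have hpt : ∀ x, (‖fk k x‖₊ : ℝ≥0∞) ^ p ≤
        (ENNReal.ofReal k) ^ (p - 2) * (‖g x‖₊ : ℝ≥0∞) ^ (2:ℝ) := by
      intro x
      rw [habs k x]
      nth_rewrite 1 [show p = (p - 2) + 2 by ring]
      rw [ENNReal.rpow_add_of_nonneg _ _ (by linarith) (by norm_num)]
      apply mul_le_mul'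
      · exact ENNReal.rpow_le_rpow (ENNReal.ofReal_le_ofReal (min_le_right _ _)) (by linarith)
      · apply ENNReal.rpow_le_rpow _ (by norm_num)
        rw [← enorm_eq_nnnorm, Real.enorm_eq_ofReal_abs]
        exact ENNReal.ofReal_le_ofReal (min_le_left _ _)
    have hb : (∫⁻ x in Ω, (‖fk k x‖₊ : ℝ≥0∞) ^ p) ≤
        (ENNReal.ofReal k) ^ (p-2) * ∫⁻ x in Ω, (‖g x‖₊ : ℝ≥0∞) ^ (2:ℝ) := by
      calc (∫⁻ x in Ω, (‖fk k x‖₊ : ℝ≥0∞) ^ p)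
          ≤ ∫⁻ x in Ω, (ENNReal.ofReal k) ^ (p-2) * (‖g x‖₊:ℝ≥0∞) ^ (2:ℝ) := lintegral_mono hpt
        _ = _ := lintegral_const_mul' _ _
            (ENNReal.rpow_ne_top_of_nonneg (by linarith) ENNReal.ofReal_ne_top)
    exact ne_top_of_le_ne_top (ENNReal.mul_ne_top
      (ENNReal.rpow_ne_top_of_nonneg (by linarith) ENNReal.ofReal_ne_top) hgL2) hb
  have hcore : ∀ k : ℕ, (∫⁻ x in Ω, (‖fk k x‖₊ : ℝ≥0∞) ^ p) ≤
      (K ^ (p/2) * gagliardoSq s Ω g ^ (1/2:ℝ)) ^ p := by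
    intro k
    have h1 := core hΩopen.measurableSet hCΩ hdensity hs0 hsN hp (fk k) (hfkm k) (hfin k)
    have h2 : gagliardoSq s Ω (fk k) ^ (1/2:ℝ) ≤ gagliardoSq s Ω g ^ (1/2:ℝ) :=
      ENNReal.rpow_le_rpow (gagliardoSq_trunc_le g k) (by norm_num)
    have h3 := le_trans h1 (mul_le_mul_right h2 _)
    calc (∫⁻ x in Ω, (‖fk k x‖₊ : ℝ≥0∞) ^ p)
        = ((∫⁻ x in Ω, (‖fk k x‖₊ : ℝ≥0∞) ^ p) ^ (1/p)) ^ p := by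
          rw [← ENNReal.rpow_mul, one_div, inv_mul_cancel₀ (ne_of_gt hp0), ENNReal.rpow_one]
      _ ≤ _ := ENNReal.rpow_le_rpow h3 hp0.le
  have hmono : ∀ x, Monotone (fun k : ℕ => (‖fk k x‖₊ : ℝ≥0∞) ^ p) := by
    intro x k l hkl
    apply ENNReal.rpow_le_rpow _ hp0.le
    rw [habs, habs]
    exact ENNReal.ofReal_le_ofReal (min_le_min le_rfl (Nat.cast_le.mpr hkl))
  have htend : ∀ x, Filter.Tendsto (fun k : ℕ => (‖fk k x‖₊ : ℝ≥0∞) ^ p) Filter.atTop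
      (nhds ((‖g x‖₊ : ℝ≥0∞) ^ p)) := by
    intro x
    apply tendsto_atTop_of_eventually_const (i₀ := ⌈|g x|⌉₊)
    intro k hk
    rw [habs, min_eq_left (le_trans (Nat.le_ceil _) (Nat.cast_le.mpr hk)),
      ← Real.enorm_eq_ofReal_abs, enorm_eq_nnnorm]
  have hlim := lintegral_tendsto_of_tendsto_of_monotone
    (μ := volume.restrict Ω)
    (fun k => ((hfkm k).nnnorm.coe_nnreal_ennreal.pow measurable_const).aemeasurable)
    (ae_of_all _ hmono) (ae_of_all _ htend)
  have hle : (∫⁻ x in Ω, (‖g x‖₊:ℝ≥0∞) ^ p) ≤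
      (K ^ (p/2) * gagliardoSq s Ω g ^ (1/2:ℝ)) ^ p :=
    le_of_tendsto hlim (Filter.Eventually.of_forall hcore)
  calc (∫⁻ x in Ω, (‖g x‖₊:ℝ≥0∞) ^ p) ^ (1/p)
      ≤ ((K ^ (p/2) * gagliardoSq s Ω g ^ (1/2:ℝ)) ^ p) ^ (1/p) :=
        ENNReal.rpow_le_rpow hle (by positivity)
    _ = K ^ (p/2) * gagliardoSq s Ω g ^ (1/2:ℝ) := by
        rw [← ENNReal.rpow_mul, mul_one_div, div_self (ne_of_gt hp0), ENNReal.rpow_one]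
end

section
/- Let N ≥ 1, c ∈ (0,1), R > 0, and let Ω_s ⊂ ℝ^N be a nonempty open set with Ω_s ⊂ B_R(0), and let Ω_r = ℝ^N ∖ closure(Ω_s). Then there exist positive constants c₁ = c₁(R, N, c) and c₂ = c₂(R, N, c) such that for every u ∈ L²(ℝ^N), ∫_{Ω_s} ∫_{Ω_r} (u(x) − u(y))² / |x−y|^{N+2c} dy dx ≥ c₁ ‖u‖_{L²(Ω_s)}² − c₂ ‖u‖_{L²(Ω_r)}². -/
open MeasureTheory ENNReal

private lemma key_div_ineq (a b D D1 D2 : ℝ) (hD1 : 0 < D1) (h1 : D1 ≤ D) (h2 : D ≤ D2) :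
    a ^ 2 / (2 * D2) - b ^ 2 / D1 ≤ (a - b) ^ 2 / D := by
  have hD : 0 < D := hD1.trans_le h1
  have hD2 : 0 < D2 := hD.trans_le h2
  rcases le_or_gt (a ^ 2 / 2) (b ^ 2) with h | h
  · have h3 : a ^ 2 / (2 * D2) ≤ a ^ 2 / (2 * D1) :=
      div_le_div_of_nonneg_left (by positivity) (by positivity) (by linarith)
    have h4 : (a ^ 2 / 2) / D1 ≤ b ^ 2 / D1 := by gcongr
    have h5 : 0 ≤ (a - b) ^ 2 / D := by positivity
    have h6 : a ^ 2 / (2 * D1) = (a ^ 2 / 2) / D1 := by ring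
    linarith
  · have hpos : 0 ≤ a ^ 2 / 2 - b ^ 2 := by linarith
    calc a ^ 2 / (2 * D2) - b ^ 2 / D1
        ≤ a ^ 2 / (2 * D2) - b ^ 2 / D2 := by
          have : b ^ 2 / D2 ≤ b ^ 2 / D1 :=
            div_le_div_of_nonneg_left (by positivity) hD1 (by linarith)
          linarith
      _ = (a ^ 2 / 2 - b ^ 2) / D2 := by ring
      _ ≤ (a ^ 2 / 2 - b ^ 2) / D := by gcongr
      _ ≤ (a - b) ^ 2 / D := by
          have : a ^ 2 / 2 - b ^ 2 ≤ (a - b) ^ 2 := by nlinarith [sq_nonneg (a - 2 * b)]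
          gcongr

private lemma enorm_rpow_two (r : ℝ) :
    ‖r‖ₑ ^ (2 : ℝ) = ENNReal.ofReal (r ^ 2) := by
  rw [show (2:ℝ) = ((2:ℕ):ℝ) by norm_num, ENNReal.rpow_natCast,
    ← sq_abs, ENNReal.ofReal_pow (abs_nonneg r), Real.enorm_eq_ofReal_abs]

private lemma elpnorm_sq_eq {α : Type*} [MeasurableSpace α] (μ : Measure α)
    (u g : α → ℝ) (hug : u =ᵐ[μ] g) :
    eLpNorm u 2 μ ^ (2 : ℝ) = ∫⁻ x, ENNReal.ofReal (g x ^ 2) ∂μ := by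
  have h2 : ((2 : ℝ≥0∞)).toReal = (2 : ℝ) := by simp
  rw [eLpNorm_eq_lintegral_rpow_enorm_toReal two_ne_zero ENNReal.ofNat_ne_top, ← ENNReal.rpow_mul, h2,
    show (1 / (2:ℝ)) * 2 = 1 by norm_num, ENNReal.rpow_one]
  exact lintegral_congr_ae <| by
    filter_upwards [hug] with x hx
    rw [enorm_rpow_two, hx]

/-- The coupling (cross) term controls the `L²` norm on the bounded component from below,
up to the `L²` norm on the exterior component. -/
theorem cross_term_lower_bound (N : ℕ) (hN : 1 ≤ N) (c R : ℝ)
    (hc : c ∈ Set.Ioo (0 : ℝ) 1) (hR : 0 < R)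
    (Ωs : Set (EuclideanSpace ℝ (Fin N))) (hne : Ωs.Nonempty) (hΩs : IsOpen Ωs)
    (hsub : Ωs ⊆ Metric.ball 0 R) :
    ∃ c₁ c₂ : ℝ, 0 < c₁ ∧ 0 < c₂ ∧
      ∀ u : EuclideanSpace ℝ (Fin N) → ℝ, MemLp u 2 volume →
        ENNReal.ofReal c₁ * eLpNorm u 2 (volume.restrict Ωs) ^ (2 : ℝ) ≤
          (∫⁻ x in Ωs, ∫⁻ y in (closure Ωs)ᶜ,
              ENNReal.ofReal ((u x - u y) ^ 2 / ‖x - y‖ ^ ((N : ℝ) + 2 * c))) +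
            ENNReal.ofReal c₂ * eLpNorm u 2 (volume.restrict (closure Ωs)ᶜ) ^ (2 : ℝ) := by
  obtain ⟨hc0, hc1⟩ := hc
  set p : ℝ := (N : ℝ) + 2 * c with hp
  have hp0 : 0 < p := add_pos_of_nonneg_of_pos (Nat.cast_nonneg N) (by linarith)
  have hK1 : 0 < R ^ p := Real.rpow_pos_of_pos hR p
  have hK4 : 0 < (4 * R) ^ p := Real.rpow_pos_of_pos (by linarith) p
  have hK14 : R ^ p ≤ (4 * R) ^ p := Real.rpow_le_rpow hR.le (by linarith) hp0.le
  -- the annulus A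
  set A : Set (EuclideanSpace ℝ (Fin N)) :=
    Metric.closedBall 0 (3 * R) \ Metric.ball 0 (2 * R) with hA
  have hAmeas : MeasurableSet A := measurableSet_closedBall.diff measurableSet_ball
  have hclos : closure Ωs ⊆ Metric.closedBall 0 R :=
    (closure_mono hsub).trans Metric.closure_ball_subset_closedBall
  have hAsub : A ⊆ (closure Ωs)ᶜ := by
    intro y hy
    simp only [Set.mem_compl_iff]
    intro hyc
    have h1 : ‖y‖ ≤ R := by simpa using hclos hyc
    have h2 : ¬ dist y 0 < 2 * R := hy.2
    rw [dist_zero_right] at h2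
    linarith
  -- norm bounds on A
  have hnormA : ∀ y ∈ A, 2 * R ≤ ‖y‖ ∧ ‖y‖ ≤ 3 * R := by
    intro y hy
    have h2 : ¬ dist y 0 < 2 * R := hy.2
    have h3 : dist y 0 ≤ 3 * R := hy.1
    rw [dist_zero_right] at h2 h3
    exact ⟨by linarith, h3⟩
  -- A has positive finite volume
  have hvA0 : 0 < volume A := by
    set z : EuclideanSpace ℝ (Fin N) :=
      (5 * R / 2) • EuclideanSpace.single (⟨0, hN⟩ : Fin N) (1 : ℝ) with hz
    have hznorm : ‖z‖ = 5 * R / 2 := by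
      rw [hz, norm_smul, EuclideanSpace.norm_single]
      simp [abs_of_pos, hR]
    have hball : Metric.ball z (R / 2) ⊆ A := by
      intro w hw
      rw [Metric.mem_ball, dist_eq_norm] at hw
      have hub : ‖w‖ ≤ ‖z‖ + ‖w - z‖ := norm_le_norm_add_norm_sub' w z
      have hlb : ‖z‖ - ‖w - z‖ ≤ ‖w‖ := by
        have := norm_sub_norm_le z w
        rw [norm_sub_rev] at this
        linarith
      constructor
      · rw [Metric.mem_closedBall, dist_zero_right]; linarith [hznorm]
      · intro hmem
        rw [Metric.mem_ball, dist_zero_right] at hmem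
        linarith [hznorm]
    exact lt_of_lt_of_le (Metric.measure_ball_pos volume z (by positivity)) (measure_mono hball)
  have hvAtop : volume A ≠ ⊤ :=
    ((measure_mono Set.diff_subset).trans_lt measure_closedBall_lt_top).ne
  -- Ωs has positive finite volume
  have hvS0 : 0 < volume Ωs := hΩs.measure_pos volume hne
  have hvStop : volume Ωs ≠ ⊤ :=
    ((measure_mono hsub).trans_lt measure_ball_lt_top).ne
  -- constants
  refine ⟨(volume A).toReal * (1 / (2 * (4 * R) ^ p)),
    (volume Ωs).toReal * (1 / R ^ p), ?_, ?_, ?_⟩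
  · have := ENNReal.toReal_pos hvA0.ne' hvAtop
    positivity
  · have := ENNReal.toReal_pos hvS0.ne' hvStop
    positivity
  intro u hu
  obtain ⟨g, hgm, hug⟩ : ∃ g, StronglyMeasurable g ∧ u =ᵐ[volume] g :=
    ⟨hu.1.mk u, hu.1.stronglyMeasurable_mk, hu.1.ae_eq_mk⟩
  have hgmeas : Measurable g := hgm.measurable
  -- rewrite eLpNorms as lintegrals of g
  rw [elpnorm_sq_eq _ u g (ae_restrict_of_ae hug),
    elpnorm_sq_eq _ u g (ae_restrict_of_ae hug)]
  -- rewrite double integral in terms of g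
  have hDg : (∫⁻ x in Ωs, ∫⁻ y in (closure Ωs)ᶜ,
        ENNReal.ofReal ((u x - u y) ^ 2 / ‖x - y‖ ^ p))
      = ∫⁻ x in Ωs, ∫⁻ y in (closure Ωs)ᶜ,
        ENNReal.ofReal ((g x - g y) ^ 2 / ‖x - y‖ ^ p) := by
    refine lintegral_congr_ae ?_
    filter_upwards [ae_restrict_of_ae hug] with x hx
    refine lintegral_congr_ae ?_
    filter_upwards [ae_restrict_of_ae hug] with y hy
    rw [hx, hy]
  rw [hDg]
  -- the inner-integral lower bound
  have hgy_meas : Measurable fun y => ENNReal.ofReal (g y ^ 2 / R ^ p) :=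
    ((hgmeas.pow_const 2).div_const _).ennreal_ofReal
  set C2 : ℝ≥0∞ := ∫⁻ y in (closure Ωs)ᶜ, ENNReal.ofReal (g y ^ 2 / R ^ p) with hC2
  have inner_bound : ∀ x ∈ Ωs,
      ENNReal.ofReal (g x ^ 2 / (2 * (4 * R) ^ p)) * volume A ≤
        (∫⁻ y in (closure Ωs)ᶜ, ENNReal.ofReal ((g x - g y) ^ 2 / ‖x - y‖ ^ p)) + C2 := by
    intro x hx
    have hxR : ‖x‖ < R := by simpa using hsub hx
    have hkey : ∀ y ∈ A,
        ENNReal.ofReal (g x ^ 2 / (2 * (4 * R) ^ p)) ≤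
          ENNReal.ofReal ((g x - g y) ^ 2 / ‖x - y‖ ^ p) + ENNReal.ofReal (g y ^ 2 / R ^ p) := by
      intro y hy
      obtain ⟨hy1, hy2⟩ := hnormA y hy
      have hd1 : R ≤ ‖x - y‖ := by
        have := norm_sub_norm_le y x
        rw [norm_sub_rev y x] at this
        linarith
      have hd2 : ‖x - y‖ ≤ 4 * R := by
        have := norm_sub_le x y
        linarith
      have hD1 : R ^ p ≤ ‖x - y‖ ^ p := Real.rpow_le_rpow hR.le hd1 hp0.le
      have hD2 : ‖x - y‖ ^ p ≤ (4 * R) ^ p :=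
        Real.rpow_le_rpow (norm_nonneg _) hd2 hp0.le
      have hreal : g x ^ 2 / (2 * (4 * R) ^ p) ≤
          (g x - g y) ^ 2 / ‖x - y‖ ^ p + g y ^ 2 / R ^ p := by
        have := key_div_ineq (g x) (g y) (‖x - y‖ ^ p) (R ^ p) ((4 * R) ^ p) hK1 hD1 hD2
        linarith
      calc ENNReal.ofReal (g x ^ 2 / (2 * (4 * R) ^ p))
          ≤ ENNReal.ofReal ((g x - g y) ^ 2 / ‖x - y‖ ^ p + g y ^ 2 / R ^ p) :=
            ENNReal.ofReal_le_ofReal hreal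
        _ = _ := ENNReal.ofReal_add (by positivity) (by positivity)
    calc ENNReal.ofReal (g x ^ 2 / (2 * (4 * R) ^ p)) * volume A
        = ∫⁻ _ in A, ENNReal.ofReal (g x ^ 2 / (2 * (4 * R) ^ p)) :=
          (setLIntegral_const _ _).symm
      _ ≤ ∫⁻ y in A, (ENNReal.ofReal ((g x - g y) ^ 2 / ‖x - y‖ ^ p) +
            ENNReal.ofReal (g y ^ 2 / R ^ p)) := setLIntegral_mono' hAmeas hkey
      _ = (∫⁻ y in A, ENNReal.ofReal ((g x - g y) ^ 2 / ‖x - y‖ ^ p)) +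
            ∫⁻ y in A, ENNReal.ofReal (g y ^ 2 / R ^ p) :=
          lintegral_add_right _ hgy_meas
      _ ≤ _ := by
          refine add_le_add ?_ ?_ <;>
            exact lintegral_mono' (Measure.restrict_mono hAsub le_rfl) le_rfl
  -- put everything together
  have const1 : ENNReal.ofReal ((volume A).toReal * (1 / (2 * (4 * R) ^ p))) =
      volume A * ENNReal.ofReal (1 / (2 * (4 * R) ^ p)) := by
    rw [ENNReal.ofReal_mul ENNReal.toReal_nonneg, ENNReal.ofReal_toReal hvAtop]
  have const2 : ENNReal.ofReal ((volume Ωs).toReal * (1 / R ^ p)) =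
      volume Ωs * ENNReal.ofReal (1 / R ^ p) := by
    rw [ENNReal.ofReal_mul ENNReal.toReal_nonneg, ENNReal.ofReal_toReal hvStop]
  calc ENNReal.ofReal ((volume A).toReal * (1 / (2 * (4 * R) ^ p))) *
        ∫⁻ x in Ωs, ENNReal.ofReal (g x ^ 2)
      = ∫⁻ x in Ωs, ENNReal.ofReal (g x ^ 2 / (2 * (4 * R) ^ p)) * volume A := by
        rw [const1, mul_comm (volume A),
          ← lintegral_const_mul' _ _
            (ENNReal.mul_ne_top ENNReal.ofReal_ne_top hvAtop)]
        refine lintegral_congr fun x => ?_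
        rw [show g x ^ 2 / (2 * (4 * R) ^ p) = g x ^ 2 * (1 / (2 * (4 * R) ^ p)) by ring,
          ENNReal.ofReal_mul (by positivity)]
        ring
    _ ≤ ∫⁻ x in Ωs, ((∫⁻ y in (closure Ωs)ᶜ,
            ENNReal.ofReal ((g x - g y) ^ 2 / ‖x - y‖ ^ p)) + C2) :=
        setLIntegral_mono' hΩs.measurableSet inner_bound
    _ = (∫⁻ x in Ωs, ∫⁻ y in (closure Ωs)ᶜ,
            ENNReal.ofReal ((g x - g y) ^ 2 / ‖x - y‖ ^ p)) + C2 * volume Ωs := by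
        rw [lintegral_add_right _ measurable_const, setLIntegral_const]
    _ ≤ _ := by
        refine add_le_add le_rfl ?_
        have hC2eq : C2 = ENNReal.ofReal (1 / R ^ p) *
            ∫⁻ y in (closure Ωs)ᶜ, ENNReal.ofReal (g y ^ 2) := by
          rw [← lintegral_const_mul' _ _ ENNReal.ofReal_ne_top]
          refine lintegral_congr fun y => ?_
          rw [show g y ^ 2 / R ^ p = (1 / R ^ p) * g y ^ 2 by ring,
            ENNReal.ofReal_mul (by positivity)]
        rw [hC2eq, const2]
        exact le_of_eq (by ring)
end
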